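/- Suppose a(0) > 0, f(0) > 0, the throat boundary conditions χ'(0) = a'(0) = f'(0) = 0 hold, and the constraint (C) holds at r = 0. Define the rescaled energy density ρ̂ = -((2ℓ+1)/(8π))·[a·χ'² + (ℓ(ℓ+1)/f + μ² - Λ̃χ² + ω²/a)·χ²]. Then ρ̂(0) = 1/f(0) - ((2ℓ+1)/(4π))·ω²·χ(0)²/a(0). In particular, if ω = 0 then ρ̂(0) = 1/f(0) > 0, i.e., the energy density measured by static observers is strictly positive at the throat. -/

import Mathlib

open Real Filter

noncomputable section

/-- `Λ̃ = (2ℓ+1)Λ/(4π)`. -/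
def lamT (Λ : ℝ) (ℓ : ℕ) : ℝ := (2 * (ℓ : ℝ) + 1) * Λ / (4 * Real.pi)

/-- Field equation (E1):
`χ'' = -(f'/f + a'/a)·χ' + (1/a)·[μ² - ω²/a + ℓ(ℓ+1)/f - 2Λ̃χ²]·χ`. -/
def EqE1 (μ ω Λ : ℝ) (ℓ : ℕ) (χ a f : ℝ → ℝ) (r : ℝ) : Prop :=
  deriv (deriv χ) r =
    -(deriv f r / f r + deriv a r / a r) * deriv χ r +
      (1 / a r) *
        (μ ^ 2 - ω ^ 2 / a r + (ℓ : ℝ) * ((ℓ : ℝ) + 1) / f r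
          - 2 * lamT Λ ℓ * χ r ^ 2) * χ r

/-- Field equation (E2):
`a'' = -(f'/f)·a' + ((2ℓ+1)/(4π))·[μ² - 2ω²/a - Λ̃χ²]·χ²`. -/
def EqE2 (μ ω Λ : ℝ) (ℓ : ℕ) (χ a f : ℝ → ℝ) (r : ℝ) : Prop :=
  deriv (deriv a) r =
    -(deriv f r / f r) * deriv a r +
      ((2 * (ℓ : ℝ) + 1) / (4 * Real.pi)) *
        (μ ^ 2 - 2 * ω ^ 2 / a r - lamT Λ ℓ * χ r ^ 2) * χ r ^ 2

/-- Field equation (E3):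
`f'' = (1/a)·(-a'·f' + 2 + ((2ℓ+1)/(4π))·[(μ² - Λ̃χ²)·f + ℓ(ℓ+1)]·χ²)`. -/
def EqE3 (μ ω Λ : ℝ) (ℓ : ℕ) (χ a f : ℝ → ℝ) (r : ℝ) : Prop :=
  deriv (deriv f) r =
    (1 / a r) *
      (-(deriv a r) * deriv f r + 2 +
        ((2 * (ℓ : ℝ) + 1) / (4 * Real.pi)) *
          ((μ ^ 2 - lamT Λ ℓ * χ r ^ 2) * f r + (ℓ : ℝ) * ((ℓ : ℝ) + 1)) * χ r ^ 2)

/-- Constraint (C):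
`(f'/(2f))·(a' + a·f'/(2f)) - 1/f
  = ((2ℓ+1)/(8π))·[-a·χ'² + (μ² - Λ̃χ² - ω²/a + ℓ(ℓ+1)/f)·χ²]`. -/
def EqC (μ ω Λ : ℝ) (ℓ : ℕ) (χ a f : ℝ → ℝ) (r : ℝ) : Prop :=
  (deriv f r / (2 * f r)) * (deriv a r + a r * deriv f r / (2 * f r)) - 1 / f r =
    ((2 * (ℓ : ℝ) + 1) / (8 * Real.pi)) *
      (-(a r) * deriv χ r ^ 2 +
        (μ ^ 2 - lamT Λ ℓ * χ r ^ 2 - ω ^ 2 / a r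
          + (ℓ : ℝ) * ((ℓ : ℝ) + 1) / f r) * χ r ^ 2)

/-- The rescaled energy density `ρ̂ = 8πρ` measured by static observers. -/
def rhoHat (μ ω Λ : ℝ) (ℓ : ℕ) (χ a f : ℝ → ℝ) (r : ℝ) : ℝ :=
  -((2 * (ℓ : ℝ) + 1) / (8 * Real.pi)) *
    (a r * deriv χ r ^ 2 +
      ((ℓ : ℝ) * ((ℓ : ℝ) + 1) / f r + μ ^ 2 - lamT Λ ℓ * χ r ^ 2 + ω ^ 2 / a r) * χ r ^ 2)

/-- at the throat, `ρ̂(0) = 1/f(0) - ((2ℓ+1)/(4π))·ω²·χ(0)²/a(0)`;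
in particular for `ω = 0` the energy density is strictly positive there. -/
theorem energy_density_at_throat
    (μ ω Λ : ℝ) (ℓ : ℕ) (χ a f : ℝ → ℝ)
    (ha0 : 0 < a 0) (hf0 : 0 < f 0)
    (hχ'0 : deriv χ 0 = 0) (ha'0 : deriv a 0 = 0) (hf'0 : deriv f 0 = 0)
    (hC : EqC μ ω Λ ℓ χ a f 0) :
    rhoHat μ ω Λ ℓ χ a f 0 =
      1 / f 0 - ((2 * (ℓ : ℝ) + 1) / (4 * Real.pi)) * ω ^ 2 * χ 0 ^ 2 / a 0 ∧
    (ω = 0 → rhoHat μ ω Λ ℓ χ a f 0 = 1 / f 0 ∧ 0 < rhoHat μ ω Λ ℓ χ a f 0) := by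
  have hπ : (Real.pi : ℝ) ≠ 0 := Real.pi_ne_zero
  have ha : a 0 ≠ 0 := ne_of_gt ha0
  have hf : f 0 ≠ 0 := ne_of_gt hf0
  unfold EqC at hC
  rw [hχ'0, ha'0, hf'0] at hC
  have main : rhoHat μ ω Λ ℓ χ a f 0 =
      1 / f 0 - ((2 * (ℓ : ℝ) + 1) / (4 * Real.pi)) * ω ^ 2 * χ 0 ^ 2 / a 0 := by
    unfold rhoHat
    rw [hχ'0]
    field_simp at hC ⊢
    apply mul_left_cancel₀ hf
    linear_combination hC
  refine ⟨main, fun hω => ?_⟩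
  subst hω
  have h1 : rhoHat μ 0 Λ ℓ χ a f 0 = 1 / f 0 := by
    rw [main]; ring
  exact ⟨h1, h1 ▸ by positivity⟩
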